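/- If X is a monotonically retractable space, then its Alexandroff duplicate AD(X) is also monotonically retractable. -/

import Mathlib

open Filter Topology Set

universe u v

/-- `[X]^{≤ω}`: the countable subsets of `X`, ordered by inclusion. -/
abbrev CtbSet (X : Type*) := {A : Set X // A.Countable}

/-- A map between families of countable sets is `ω`-monotone if it is monotone with respect to
inclusion and preserves unions of increasing `ω`-chains. -/
def OmegaMonotone {X Y : Type*} (φ : CtbSet X → CtbSet Y) : Prop :=
  (∀ A B : CtbSet X, A.1 ⊆ B.1 → (φ A).1 ⊆ (φ B).1) ∧
  ∀ (A : ℕ → CtbSet X) (B : CtbSet X), (∀ n, (A n).1 ⊆ (A (n + 1)).1) →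
    B.1 = ⋃ n, (A n).1 → (φ B).1 = ⋃ n, (φ (A n)).1

/-- An assignment of sets indexed by a poset `Γ` is `ω`-monotone if it is order preserving and
sends suprema of increasing `ω`-chains to the union of the images. -/
def OmegaMonotoneIdx {Γ Y : Type*} [Preorder Γ] (D : Γ → Set Y) : Prop :=
  (∀ s t : Γ, s ≤ t → D s ⊆ D t) ∧
  ∀ (s : ℕ → Γ) (t : Γ), Monotone s → IsLUB (Set.range s) t → D t = ⋃ n, D (s n)

/-- `N` is a network of the map `f`. -/
def IsNetworkOfMap {X Y : Type*} [TopologicalSpace Y] (N : Set (Set X)) (f : X → Y) : Prop :=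
  ∀ x : X, ∀ U : Set Y, IsOpen U → f x ∈ U → ∃ M ∈ N, x ∈ M ∧ f '' M ⊆ U

/-- `q : X → Y` is an `ℝ`-quotient map. -/
def RQuotient {X Y : Type*} [TopologicalSpace X] [TopologicalSpace Y] (q : X → Y) : Prop :=
  Continuous q ∧ Function.Surjective q ∧ ∀ g : Y → ℝ, Continuous (g ∘ q) → Continuous g

/-- The family `r` of retractions indexed by `Γ` is an `r`-skeleton on `X`. -/
structure IsRSkeleton {X : Type*} [TopologicalSpace X] {Γ : Type*} [PartialOrder Γ]
    (r : Γ → X → X) : Prop where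
  directed : ∀ s t : Γ, ∃ u, s ≤ u ∧ t ≤ u
  sigma : ∀ s : ℕ → Γ, Monotone s → ∃ t, IsLUB (Set.range s) t
  cont : ∀ s, Continuous (r s)
  retract : ∀ s x, r s (r s x) = r s x
  cosmic : ∀ s, ∃ N : Set (Set X), N.Countable ∧ (∀ M ∈ N, M ⊆ Set.range (r s)) ∧
    ∀ x ∈ Set.range (r s), ∀ U : Set X, IsOpen U → x ∈ U → ∃ M ∈ N, x ∈ M ∧ M ⊆ U
  comm₁ : ∀ s t : Γ, s ≤ t → ∀ x, r s (r t x) = r s x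
  comm₂ : ∀ s t : Γ, s ≤ t → ∀ x, r t (r s x) = r s x
  chain : ∀ (s : ℕ → Γ) (t : Γ), Monotone s → IsLUB (Set.range s) t →
    ∀ x, Tendsto (fun n => r (s n) x) atTop (𝓝 (r t x))
  toId : ∀ x : X, Tendsto (fun s : Γ => r s x) atTop (𝓝 x)

def IsFullRSkeleton {X : Type*} [TopologicalSpace X] {Γ : Type*} [PartialOrder Γ]
    (r : Γ → X → X) : Prop :=
  IsRSkeleton r ∧ ∀ x : X, ∃ s : Γ, x ∈ Set.range (r s)

def HasFullRSkeleton (X : Type u) [TopologicalSpace X] : Prop :=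
  ∃ (Γ : Type u) (inst : PartialOrder Γ) (r : Γ → X → X), @IsFullRSkeleton X _ Γ inst r

/-- A strong `r`-skeleton: an `r`-skeleton such that for every index `s`, every `n` and every
closed subset `F` of `X^n` there is `t ≥ s` whose `n`-th power maps `F` into itself. -/
def IsStrongRSkeleton {X : Type*} [TopologicalSpace X] {Γ : Type*} [PartialOrder Γ]
    (r : Γ → X → X) : Prop :=
  IsRSkeleton r ∧ ∀ (s : Γ) (n : ℕ) (F : Set (Fin n → X)), IsClosed F →
    ∃ t : Γ, s ≤ t ∧ (fun (v : Fin n → X) (i : Fin n) => r t (v i)) '' F ⊆ F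

def HasStrongRSkeleton (X : Type u) [TopologicalSpace X] : Prop :=
  ∃ (Γ : Type u) (inst : PartialOrder Γ) (r : Γ → X → X), @IsStrongRSkeleton X _ Γ inst r

/-- A `q`-skeleton on `X` indexed by the up-directed σ-complete poset `Γ`. -/
structure QSkeleton (X : Type u) [TopologicalSpace X] (Γ : Type v) [PartialOrder Γ] where
  Xs : Γ → Type u
  top : ∀ s, TopologicalSpace (Xs s)
  q : ∀ s, X → Xs s
  D : Γ → Set X
  directed : ∀ s t : Γ, ∃ u, s ≤ u ∧ t ≤ u
  sigma : ∀ s : ℕ → Γ, Monotone s → ∃ t, IsLUB (Set.range s) t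
  rquot : ∀ s, @RQuotient X (Xs s) _ (top s) (q s)
  D_ctble : ∀ s, (D s).Countable
  dense : ∀ s, @Dense (Xs s) (top s) (q s '' D s)
  proj : ∀ s t : Γ, s ≤ t → ∃ p : Xs t → Xs s, @Continuous _ _ (top t) (top s) p ∧
    Function.Surjective p ∧ ∀ x, q s x = p (q t x)
  Dmono : OmegaMonotoneIdx D

/-- The `q`-skeleton is full: `C_p(X) = ⋃_s q_s^*(C_p(X_s))`. -/
def QSkeleton.Full {X : Type u} [TopologicalSpace X] {Γ : Type v} [PartialOrder Γ]
    (S : QSkeleton X Γ) : Prop :=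
  ∀ f : X → ℝ, Continuous f →
    ∃ (s : Γ) (g : S.Xs s → ℝ), @Continuous _ _ (S.top s) _ g ∧ f = g ∘ S.q s

def HasFullQSkeleton (X : Type u) [TopologicalSpace X] : Prop :=
  ∃ (Γ : Type u) (inst : PartialOrder Γ) (S : @QSkeleton X _ Γ inst), S.Full

/-- `C_p(X)`: continuous real-valued functions with the topology of pointwise convergence. -/
abbrev Cp (X : Type u) [TopologicalSpace X] : Type u := {f : X → ℝ // Continuous f}

/-- The diagonal map `Δ_A : X → ℝ^A` of a set `A ⊆ C_p(X)`. -/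
def cpDiag {X : Type u} [TopologicalSpace X] (A : Set (Cp X)) (x : X) : ↥A → ℝ :=
  fun f => f.1.1 x

/-- The topology of the Alexandroff duplicate on `X × Bool`. -/
def ADTopology (X : Type*) [TopologicalSpace X] : TopologicalSpace (X × Bool) where
  IsOpen V := ∀ p ∈ V, p.2 = false →
    ∃ U : Set X, IsOpen U ∧ p.1 ∈ U ∧ {q : X × Bool | q.1 ∈ U ∧ q ≠ (p.1, true)} ⊆ V
  isOpen_univ := fun p _ _ => ⟨Set.univ, isOpen_univ, trivial, fun _ _ => trivial⟩
  isOpen_inter := fun A B hA hB p hp hb => by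
    obtain ⟨U, hU, hxU, hUA⟩ := hA p hp.1 hb
    obtain ⟨W, hW, hxW, hWB⟩ := hB p hp.2 hb
    exact ⟨U ∩ W, hU.inter hW, ⟨hxU, hxW⟩,
      fun q hq => ⟨hUA ⟨hq.1.1, hq.2⟩, hWB ⟨hq.1.2, hq.2⟩⟩⟩
  isOpen_sUnion := fun S hS p hp hb => by
    obtain ⟨V, hV, hpV⟩ := hp
    obtain ⟨U, hU, hxU, hUV⟩ := hS V hV p hpV hb
    exact ⟨U, hU, hxU, fun q hq => ⟨V, hV, hUV hq⟩⟩

/-- The Alexandroff duplicate of `X`. -/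
def AD (X : Type u) [TopologicalSpace X] : Type u := X × Bool

instance (X : Type u) [TopologicalSpace X] : TopologicalSpace (AD X) := ADTopology X

/-- A compact Hausdorff space is Corson compact if it embeds into a Σ-product of real lines. -/
def IsCorsonCompact (X : Type u) [TopologicalSpace X] : Prop :=
  CompactSpace X ∧ T2Space X ∧ ∃ (κ : Type u) (e : X → κ → ℝ),
    IsEmbedding e ∧ ∀ x, {i | e x i ≠ 0}.Countable

/-- The assignments `r`, `N` witness that `X` is monotonically retractable. -/
structure MonRetractableWitness (X : Type u) [TopologicalSpace X]
    (r : CtbSet X → X → X) (N : CtbSet X → CtbSet (Set X)) : Prop where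
  cont : ∀ A, Continuous (r A)
  retract : ∀ A x, r A (r A x) = r A x
  sub : ∀ A : CtbSet X, A.1 ⊆ Set.range (r A)
  network : ∀ A, IsNetworkOfMap (N A).1 (r A)
  mono : OmegaMonotone N

def MonotonicallyRetractable (X : Type u) [TopologicalSpace X] : Prop :=
  ∃ (r : CtbSet X → X → X) (N : CtbSet X → CtbSet (Set X)), MonRetractableWitness X r N

/-- `X` is monotonically `ω`-stable. -/
def MonotonicallyOmegaStable (X : Type u) [TopologicalSpace X] : Prop :=
  ∃ N : CtbSet (Cp X) → CtbSet (Set X), OmegaMonotone N ∧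
    ∀ A : CtbSet (Cp X), IsNetworkOfMap (N A).1 (cpDiag (closure A.1))

/-- A subset `K` is countably compact: every countable open cover of `K` has a finite subcover. -/
def IsCountablyCompactSet {X : Type*} [TopologicalSpace X] (K : Set X) : Prop :=
  ∀ U : ℕ → Set X, (∀ n, IsOpen (U n)) → K ⊆ ⋃ n, U n → ∃ t : Finset ℕ, K ⊆ ⋃ n ∈ t, U n

/-- The closure of `A` under `φ`. -/
def phiBar {X : Type*} (φ : CtbSet X → CtbSet X) (A : CtbSet X) : Set X :=
  ⋂₀ {B : Set X | ∃ hB : B.Countable, A.1 ⊆ B ∧ (φ ⟨B, hB⟩).1 ⊆ B}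

/-- The iterates `φ_n` of `φ`: `φ_0(A) = A`, `φ_{n+1}(A) = φ_n(A) ∪ φ(φ_n(A))`. -/
def phiIter {X : Type*} (φ : CtbSet X → CtbSet X) : ℕ → CtbSet X → CtbSet X
  | 0, A => A
  | n + 1, A => ⟨(phiIter φ n A).1 ∪ (φ (phiIter φ n A)).1,
      (phiIter φ n A).2.union (φ (phiIter φ n A)).2⟩

section ADAux

variable {X : Type u} [TopologicalSpace X]

/-- Projection of a countable subset of the duplicate to a countable subset of `X`. -/
def adProj (A : CtbSet (AD X)) : CtbSet X :=
  ⟨Prod.fst '' (A.1 : Set (X × Bool)), A.2.image _⟩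

lemma adProj_mono {A B : CtbSet (AD X)} (h : A.1 ⊆ B.1) : (adProj A).1 ⊆ (adProj B).1 :=
  Set.image_mono h

open Classical in
/-- The retraction on the duplicate induced by `r`. -/
noncomputable def adRet (r : CtbSet X → X → X) (A : CtbSet (AD X)) (p : X × Bool) :
    X × Bool :=
  if p.2 = true ∧ p.1 ∈ (adProj A).1 then p else (r (adProj A) p.1, false)

/-- A basic member of the network on the duplicate. -/
def adPiece (M F : Set X) : Set (X × Bool) :=
  {q | (q.2 = true ∧ q.1 ∈ M ∧ q.1 ∉ F) ∨ (q.2 = false ∧ q.1 ∈ M)}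

/-- The network assignment on the duplicate induced by `N`. -/
def adNet (N : CtbSet X → CtbSet (Set X)) (A : CtbSet (AD X)) : CtbSet (Set (AD X)) :=
  ⟨(((fun a : X => ({(a, true)} : Set (X × Bool))) '' (adProj A).1) ∪
      ((fun M : Set X => adPiece M ∅) '' (N (adProj A)).1)) ∪
      ((fun q : Set X × X => adPiece q.1 {q.2}) '' ((N (adProj A)).1 ×ˢ (adProj A).1)),
    (((adProj A).2.image _).union ((N (adProj A)).2.image _)).union
      (((N (adProj A)).2.prod (adProj A).2).image _)⟩

lemma adIsOpen_iff {V : Set (X × Bool)} :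
    IsOpen[ADTopology X] V ↔ ∀ p ∈ V, p.2 = false →
      ∃ U : Set X, IsOpen U ∧ p.1 ∈ U ∧ {q : X × Bool | q.1 ∈ U ∧ q ≠ (p.1, true)} ⊆ V :=
  Iff.rfl

lemma adFix {r : CtbSet X → X → X} (hr : ∀ A x, r A (r A x) = r A x) {A : CtbSet X} {x : X}
    (hx : x ∈ Set.range (r A)) : r A x = x := by
  obtain ⟨y, rfl⟩ := hx; exact hr A y

end ADAux

lemma adRet_cont {X : Type u} [TopologicalSpace X] [T35Space X] {r : CtbSet X → X → X}
    {N : CtbSet X → CtbSet (Set X)} (hw : MonRetractableWitness X r N) (A : CtbSet (AD X)) :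
    Continuous (X := AD X) (Y := AD X) (adRet r A) := by
  apply continuous_def.mpr
  intro V hV
  refine adIsOpen_iff.mpr ?_
  intro p hp hf
  have hcond : ¬(p.2 = true ∧ p.1 ∈ (adProj A).1) := by simp [hf]
  have hRp : adRet r A p = (r (adProj A) p.1, false) := if_neg hcond
  replace hp : adRet r A p ∈ V := hp
  rw [hRp] at hp
  obtain ⟨U, hU, hmem, hbasic⟩ := adIsOpen_iff.mp hV _ hp rfl
  simp only at hmem hbasic
  set x := p.1 with hx
  set rx := r (adProj A) x with hrx
  refine ⟨(r (adProj A)) ⁻¹' U \ ({rx} \ {x}), ?_, ⟨hmem, fun h => h.2 rfl⟩, ?_⟩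
  · exact (hU.preimage (hw.cont _)).sdiff
      ((Set.Finite.subset (Set.finite_singleton rx) Set.diff_subset).isClosed)
  · rintro q ⟨hqW, hqne⟩
    show adRet r A q ∈ V
    by_cases hc : q.2 = true ∧ q.1 ∈ (adProj A).1
    · rw [show adRet r A q = q from if_pos hc]
      have hfix : r (adProj A) q.1 = q.1 := adFix hw.retract (hw.sub _ hc.2)
      refine hbasic ⟨?_, ?_⟩
      · have := hqW.1
        rwa [Set.mem_preimage, hfix] at this
      · intro hq
        have h1 : q.1 = rx := by rw [hq]
        have h2 : q.1 ∉ ({rx} \ ({x} : Set X)) := hqW.2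
        have h3 : q.1 ∈ ({x} : Set X) := by
          by_contra h3
          exact h2 ⟨h1, h3⟩
        apply hqne
        rw [hq, h1.symm.trans h3]
    · rw [show adRet r A q = (r (adProj A) q.1, false) from if_neg hc]
      refine hbasic ⟨hqW.1, ?_⟩
      intro hq
      exact Bool.false_ne_true (congrArg Prod.snd hq)

lemma adRet_retract {X : Type u} [TopologicalSpace X] {r : CtbSet X → X → X}
    {N : CtbSet X → CtbSet (Set X)} (hw : MonRetractableWitness X r N) (A : CtbSet (AD X))
    (p : X × Bool) : adRet r A (adRet r A p) = adRet r A p := by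
  by_cases hc : p.2 = true ∧ p.1 ∈ (adProj A).1
  · rw [show adRet r A p = p from if_pos hc]; exact if_pos hc
  · rw [show adRet r A p = (r (adProj A) p.1, false) from if_neg hc]
    rw [show adRet r A (r (adProj A) p.1, false) = (r (adProj A) (r (adProj A) p.1), false)
      from if_neg (fun hx => Bool.false_ne_true hx.1)]
    rw [hw.retract]

lemma adRet_sub {X : Type u} [TopologicalSpace X] {r : CtbSet X → X → X}
    {N : CtbSet X → CtbSet (Set X)} (hw : MonRetractableWitness X r N) (A : CtbSet (AD X)) :
    A.1 ⊆ Set.range (adRet r A) := by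
  intro p hp
  have hpA : p.1 ∈ (adProj A).1 := ⟨p, hp, rfl⟩
  refine ⟨p, ?_⟩
  rcases Bool.eq_false_or_eq_true p.2 with hb | hb
  · exact if_pos ⟨hb, hpA⟩
  · rw [show adRet r A p = (r (adProj A) p.1, false) from
      if_neg (fun hx => by rw [hb] at hx; exact Bool.false_ne_true hx.1)]
    have hfix : r (adProj A) p.1 = p.1 := adFix hw.retract (hw.sub _ hpA)
    rw [hfix, ← hb]
    exact Prod.mk.eta

lemma adNet_network {X : Type u} [TopologicalSpace X] {r : CtbSet X → X → X}
    {N : CtbSet X → CtbSet (Set X)} (hw : MonRetractableWitness X r N) (A : CtbSet (AD X)) :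
    IsNetworkOfMap (X := AD X) (Y := AD X) (adNet N A).1 (adRet r A) := by
  intro p V hV hpV
  by_cases hc : p.2 = true ∧ p.1 ∈ (adProj A).1
  · refine ⟨{(p.1, true)}, Or.inl (Or.inl ⟨p.1, hc.2, rfl⟩), ?_, ?_⟩
    · show p = (p.1, true)
      rw [← hc.1]; exact Prod.mk.eta.symm
    · rintro y ⟨q, hq, rfl⟩
      replace hq : q = (p.1, true) := hq
      rw [hq, show adRet r A ((p.1 : X), true) = (p.1, true) from if_pos ⟨rfl, hc.2⟩]
      have hp1 : p = (p.1, true) := by rw [← hc.1]; exact Prod.mk.eta.symm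
      rw [← hp1]
      rwa [show adRet r A p = p from if_pos hc] at hpV
  · have hRp : adRet r A p = (r (adProj A) p.1, false) := if_neg hc
    rw [hRp] at hpV
    obtain ⟨U, hU, hmem, hbasic⟩ := adIsOpen_iff.mp hV _ hpV rfl
    simp only at hmem hbasic
    obtain ⟨M, hM, hxM, hrM⟩ := hw.network (adProj A) p.1 U hU hmem
    set rx := r (adProj A) p.1 with hrx
    have himg : ∀ F : Set X, (∀ q : X × Bool, q.2 = true → q.1 ∈ (adProj A).1 → q.1 ∉ F →
        q.1 ≠ rx) → adRet r A '' adPiece M F ⊆ V := by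
      intro F hF
      rintro y ⟨q, hq, rfl⟩
      rcases hq with ⟨hq2, hqM, hqF⟩ | ⟨hq2, hqM⟩
      · by_cases hqA : q.1 ∈ (adProj A).1
        · rw [show adRet r A q = q from if_pos ⟨hq2, hqA⟩]
          have hfix : r (adProj A) q.1 = q.1 := adFix hw.retract (hw.sub _ hqA)
          refine hbasic ⟨?_, ?_⟩
          · rw [← hfix]; exact hrM (Set.mem_image_of_mem _ hqM)
          · intro he
            exact hF q hq2 hqA hqF (congrArg Prod.fst he)
        · rw [show adRet r A q = (r (adProj A) q.1, false) from if_neg (fun hx => hqA hx.2)]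
          exact hbasic ⟨hrM (Set.mem_image_of_mem _ hqM),
            fun he => Bool.false_ne_true (congrArg Prod.snd he)⟩
      · rw [show adRet r A q = (r (adProj A) q.1, false) from
          if_neg (fun hx => by rw [hq2] at hx; exact Bool.false_ne_true hx.1)]
        exact hbasic ⟨hrM (Set.mem_image_of_mem _ hqM),
          fun he => Bool.false_ne_true (congrArg Prod.snd he)⟩
    have hpmem : ∀ F : Set X, (p.2 = true → p.1 ∉ F) → p ∈ adPiece M F := by
      intro F hpF
      rcases Bool.eq_false_or_eq_true p.2 with hb | hb
      · exact Or.inl ⟨hb, hxM, hpF hb⟩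
      · exact Or.inr ⟨hb, hxM⟩
    by_cases hrxA : rx ∈ (adProj A).1
    · refine ⟨adPiece M {rx}, Or.inr ⟨(M, rx), ⟨hM, hrxA⟩, rfl⟩, ?_, ?_⟩
      · refine hpmem _ ?_
        intro hb hp1
        rw [Set.mem_singleton_iff] at hp1
        exact hc ⟨hb, by rw [hp1]; exact hrxA⟩
      · exact himg _ (fun q _ _ hqF he => hqF he)
    · refine ⟨adPiece M ∅, Or.inl (Or.inr ⟨M, hM, rfl⟩), hpmem _ (fun _ => Set.notMem_empty _), ?_⟩
      exact himg _ (fun q _ hqA _ he => hrxA (he ▸ hqA))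
lemma adNet_subset {X : Type u} [TopologicalSpace X] {N : CtbSet X → CtbSet (Set X)}
    (hN : OmegaMonotone N) {A B : CtbSet (AD X)} (h : A.1 ⊆ B.1) :
    (adNet N A).1 ⊆ (adNet N B).1 := by
  have hp : (adProj A).1 ⊆ (adProj B).1 := adProj_mono h
  have hn : (N (adProj A)).1 ⊆ (N (adProj B)).1 := hN.1 _ _ hp
  rintro S ((⟨a, ha, rfl⟩ | ⟨M, hM, rfl⟩) | ⟨⟨M, a⟩, ⟨hM, ha⟩, rfl⟩)
  · exact Or.inl (Or.inl ⟨a, hp ha, rfl⟩)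
  · exact Or.inl (Or.inr ⟨M, hn hM, rfl⟩)
  · exact Or.inr ⟨(M, a), ⟨hn hM, hp ha⟩, rfl⟩

lemma adNet_mono {X : Type u} [TopologicalSpace X] {N : CtbSet X → CtbSet (Set X)}
    (hN : OmegaMonotone N) : OmegaMonotone (adNet (X := X) N) := by
  refine ⟨fun A B h => adNet_subset hN h, ?_⟩
  intro A B hchain hB
  have hm : Monotone (fun n => (A n).1) := monotone_nat_of_le_succ hchain
  have hproj : (adProj B).1 = ⋃ n, (adProj (A n)).1 := by
    show Prod.fst '' (B.1 : Set (X × Bool)) = _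
    rw [hB]; exact Set.image_iUnion
  have hN2 : (N (adProj B)).1 = ⋃ n, (N (adProj (A n))).1 :=
    hN.2 (fun n => adProj (A n)) (adProj B) (fun n => adProj_mono (hchain n)) hproj
  apply Set.Subset.antisymm
  · rintro S ((⟨a, ha, rfl⟩ | ⟨M, hM, rfl⟩) | ⟨⟨M, a⟩, ⟨hM, ha⟩, rfl⟩)
    · rw [hproj] at ha
      obtain ⟨n, hn⟩ := Set.mem_iUnion.mp ha
      exact Set.mem_iUnion.mpr ⟨n, Or.inl (Or.inl ⟨a, hn, rfl⟩)⟩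
    · rw [hN2] at hM
      obtain ⟨n, hn⟩ := Set.mem_iUnion.mp hM
      exact Set.mem_iUnion.mpr ⟨n, Or.inl (Or.inr ⟨M, hn, rfl⟩)⟩
    · rw [hN2] at hM
      rw [hproj] at ha
      obtain ⟨n, hn⟩ := Set.mem_iUnion.mp hM
      obtain ⟨m, hm'⟩ := Set.mem_iUnion.mp ha
      refine Set.mem_iUnion.mpr ⟨max n m, Or.inr ⟨(M, a), ⟨?_, ?_⟩, rfl⟩⟩
      · exact hN.1 _ _ (adProj_mono (hm (le_max_left n m))) hn
      · exact adProj_mono (hm (le_max_right n m)) hm'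
  · intro S hS
    obtain ⟨n, hn⟩ := Set.mem_iUnion.mp hS
    refine adNet_subset hN ?_ hn
    rw [hB]
    exact Set.subset_iUnion (fun k => (A k).1) n

theorem monotonicallyRetractable_AD (X : Type u) [TopologicalSpace X] [T35Space X]
    (h : MonotonicallyRetractable X) : MonotonicallyRetractable (AD X) := by
  obtain ⟨r, N, hw⟩ := h
  exact ⟨adRet r, adNet N,
    ⟨adRet_cont hw, adRet_retract hw, adRet_sub hw, adNet_network hw, adNet_mono hw.mono⟩⟩
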